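/- Let h, w, s, m be positive integers with m + s − 1 ≤ h and m + s − 1 ≤ w, and fix a patch location (i,j) ∈ ZMod h × ZMod w. If a block position (a,b) is drawn uniformly at random from ZMod h × ZMod w, then the probability that the block B(a,b) intersects the patch Q(i,j) equals (m + s − 1)² / (hw), and this probability is strictly less than 4·max(m², s²) / (hw). (Equation 1: Δ_block = (m+s−1)²/(hw) < 4·max(m², k)/(hw) with k = s² retained pixels.) -/

import Mathlib

/-- The `L × L` square region (with cyclic wraparound in each coordinate) whose
upper-left corner is `q`, as a finite set of positions. -/
def squareF {h w : ℕ} [NeZero h] [NeZero w] (L : ℕ) (q : ZMod h × ZMod w) :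
    Finset (ZMod h × ZMod w) :=
  ((Finset.range L) ×ˢ (Finset.range L)).image
    fun uv : ℕ × ℕ => (q.1 + (uv.1 : ZMod h), q.2 + (uv.2 : ZMod w))

lemma mem_squareF {h w : ℕ} [NeZero h] [NeZero w] {L : ℕ} {q x : ZMod h × ZMod w} :
    x ∈ squareF L q ↔ ∃ u < L, ∃ v < L, x = (q.1 + (u : ZMod h), q.2 + (v : ZMod w)) := by
  simp only [squareF, Finset.mem_image, Finset.mem_product, Finset.mem_range, Prod.exists]
  constructor
  · rintro ⟨u, v, ⟨hu, hv⟩, rfl⟩; exact ⟨u, hu, v, hv, rfl⟩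
  · rintro ⟨u, hu, v, hv, rfl⟩; exact ⟨u, v, ⟨hu, hv⟩, rfl⟩

lemma card_squareF {h w : ℕ} [NeZero h] [NeZero w] {L : ℕ} (hLh : L ≤ h) (hLw : L ≤ w)
    (q : ZMod h × ZMod w) : (squareF L q).card = L ^ 2 := by
  rw [squareF, Finset.card_image_of_injOn, Finset.card_product, Finset.card_range, sq]
  rintro ⟨u, v⟩ huv ⟨u', v'⟩ huv' heq
  simp only [Finset.coe_product, Set.mem_prod, Finset.mem_coe, Finset.mem_range] at huv huv'
  simp only [Prod.mk.injEq] at heq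
  have h1 : (u : ZMod h) = u' := by
    have := heq.1; exact add_left_cancel this
  have h2 : (v : ZMod w) = v' := by
    have := heq.2; exact add_left_cancel this
  have e1 : u = u' := by
    have := congrArg ZMod.val h1
    rwa [ZMod.val_cast_of_lt (lt_of_lt_of_le huv.1 hLh),
      ZMod.val_cast_of_lt (lt_of_lt_of_le huv'.1 hLh)] at this
  have e2 : v = v' := by
    have := congrArg ZMod.val h2
    rwa [ZMod.val_cast_of_lt (lt_of_lt_of_le huv.2 hLw),
      ZMod.val_cast_of_lt (lt_of_lt_of_le huv'.2 hLw)] at this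
  rw [e1, e2]

/-- One-dimensional characterization: `∃ u<s, u'<m, a+u = i+u'` iff
`a = i - (s-1) + t` for some `t < m+s-1`. -/
lemma line_char {n : ℕ} [NeZero n] (s m : ℕ) (hs : 0 < s) (hm : 0 < m) (i a : ZMod n) :
    (∃ u < s, ∃ u' < m, a + (u : ZMod n) = i + (u' : ZMod n)) ↔
    (∃ t < m + s - 1, a = i - ((s - 1 : ℕ) : ZMod n) + (t : ZMod n)) := by
  constructor
  · rintro ⟨u, hu, u', hu', heq⟩
    refine ⟨u' + (s - 1 - u), ?_, ?_⟩
    · have : u ≤ s - 1 := Nat.le_sub_one_of_lt hu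
      omega
    · have hcast : ((u' + (s - 1 - u) : ℕ) : ZMod n)
          = (u' : ZMod n) + ((s - 1 : ℕ) : ZMod n) - (u : ZMod n) := by
        have h1 : u ≤ s - 1 := Nat.le_sub_one_of_lt hu
        push_cast [Nat.cast_sub h1]
        ring
      rw [hcast]
      have : a = i + (u' : ZMod n) - (u : ZMod n) := by
        rw [← heq]; ring
      rw [this]; ring
  · rintro ⟨t, ht, rfl⟩
    by_cases hts : t ≤ s - 1
    · refine ⟨s - 1 - t, by omega, 0, hm, ?_⟩
      have hc : ((s - 1 - t : ℕ) : ZMod n) = ((s - 1 : ℕ) : ZMod n) - (t : ZMod n) := by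
        push_cast [Nat.cast_sub hts]; ring
      rw [hc]
      push_cast
      ring
    · refine ⟨0, hs, t - (s - 1), by omega, ?_⟩
      have hc : ((t - (s - 1) : ℕ) : ZMod n) = (t : ZMod n) - ((s - 1 : ℕ) : ZMod n) := by
        push_cast [Nat.cast_sub (by omega : s - 1 ≤ t)]; ring
      rw [hc]
      push_cast
      ring

lemma event_eq {h w : ℕ} [NeZero h] [NeZero w] (s m : ℕ) (hs : 0 < s) (hm : 0 < m)
    (ij : ZMod h × ZMod w) :
    {ab : ZMod h × ZMod w | (squareF s ab ∩ squareF m ij).Nonempty}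
      = ↑(squareF (m + s - 1)
          (ij.1 - ((s - 1 : ℕ) : ZMod h), ij.2 - ((s - 1 : ℕ) : ZMod w))) := by
  ext ⟨a, b⟩
  simp only [Set.mem_setOf_eq, Finset.coe_sort_coe, Finset.mem_coe, mem_squareF]
  constructor
  · rintro ⟨⟨x, y⟩, hxy⟩
    rw [Finset.mem_inter, mem_squareF, mem_squareF] at hxy
    obtain ⟨⟨u, hu, v, hv, hxy1⟩, ⟨u', hu', v', hv', hxy2⟩⟩ := hxy
    rw [hxy1] at hxy2
    simp only [Prod.mk.injEq] at hxy2
    have hA : ∃ t < m + s - 1, a = ij.1 - ((s - 1 : ℕ) : ZMod h) + (t : ZMod h) :=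
      (line_char s m hs hm ij.1 a).mp ⟨u, hu, u', hu', hxy2.1⟩
    have hB : ∃ t < m + s - 1, b = ij.2 - ((s - 1 : ℕ) : ZMod w) + (t : ZMod w) :=
      (line_char s m hs hm ij.2 b).mp ⟨v, hv, v', hv', hxy2.2⟩
    obtain ⟨t1, ht1, e1⟩ := hA
    obtain ⟨t2, ht2, e2⟩ := hB
    exact ⟨t1, ht1, t2, ht2, by simp [e1, e2]⟩
  · rintro ⟨t1, ht1, t2, ht2, heq⟩
    simp only [Prod.mk.injEq] at heq
    obtain ⟨u, hu, u', hu', e1⟩ := (line_char s m hs hm ij.1 a).mpr ⟨t1, ht1, heq.1⟩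
    obtain ⟨v, hv, v', hv', e2⟩ := (line_char s m hs hm ij.2 b).mpr ⟨t2, ht2, heq.2⟩
    refine ⟨(ij.1 + (u' : ZMod h), ij.2 + (v' : ZMod w)), ?_⟩
    rw [Finset.mem_inter, mem_squareF, mem_squareF]
    exact ⟨⟨u, hu, v, hv, by simp [← e1, ← e2]⟩, ⟨u', hu', v', hv', rfl⟩⟩

/-- **Equation 1 (block smoothing intersection probability).** For a uniformly random
block position `(a,b)`, the probability that the `s × s` block intersects the `m × m`
patch at `(i,j)` equals `(m+s−1)²/(hw)`, which is strictly less than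
`4·max(m², s²)/(hw)`. -/
theorem block_intersection_probability
    (h w s m : ℕ) [NeZero h] [NeZero w] (hs : 0 < s) (hm : 0 < m)
    (hmh : m + s - 1 ≤ h) (hmw : m + s - 1 ≤ w)
    (ij : ZMod h × ZMod w) :
    (PMF.uniformOfFintype (ZMod h × ZMod w)).toOuterMeasure
        {ab : ZMod h × ZMod w | (squareF s ab ∩ squareF m ij).Nonempty}
      = (((m + s - 1) ^ 2 : ℕ) : ENNReal) / (((h * w : ℕ) : ENNReal))
    ∧ (((m + s - 1) ^ 2 : ℕ) : ENNReal) / (((h * w : ℕ) : ENNReal))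
      < ((4 * max (m ^ 2) (s ^ 2) : ℕ) : ENNReal) / (((h * w : ℕ) : ENNReal)) := by
  constructor
  · rw [PMF.toOuterMeasure_uniformOfFintype_apply]
    simp only [event_eq s m hs hm ij]
    congr 1
    · simp only [Finset.coe_sort_coe, Fintype.card_coe]
      rw [card_squareF hmh hmw]
    · simp [ZMod.card]
  · have hnum : (m + s - 1) ^ 2 < 4 * max (m ^ 2) (s ^ 2) := by
      have h1 : m + s - 1 < 2 * max m s := by
        rcases Nat.le_total m s with hle | hle
        · simp [Nat.max_eq_right hle]; omega
        · simp [Nat.max_eq_left hle]; omega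
      calc (m + s - 1) ^ 2 < (2 * max m s) ^ 2 := by
            apply Nat.pow_lt_pow_left h1 (by norm_num)
        _ = 4 * (max m s) ^ 2 := by ring
        _ = 4 * max (m ^ 2) (s ^ 2) := by
            rcases Nat.le_total m s with hle | hle
            · rw [Nat.max_eq_right hle, Nat.max_eq_right (Nat.pow_le_pow_left hle 2)]
            · rw [Nat.max_eq_left hle, Nat.max_eq_left (Nat.pow_le_pow_left hle 2)]
    have hhw : ((h * w : ℕ) : ENNReal) ≠ 0 := by
      simp [NeZero.ne h, NeZero.ne w]
    have hhw' : ((h * w : ℕ) : ENNReal) ≠ ⊤ := ENNReal.natCast_ne_top _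
    rw [div_eq_mul_inv, div_eq_mul_inv]
    exact ENNReal.mul_lt_mul_left (ENNReal.inv_ne_zero.mpr hhw')
      (ENNReal.inv_ne_top.mpr hhw) (by exact_mod_cast hnum)
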